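/- (Value of ℓ in type G_2.) (a) For all nonzero dominant vectors h, λ ∈ ℝ², every composition w of at most 2 of the simple reflections s₁, s₂ of type G_2 satisfies ⟨w λ, h⟩ ≥ 0. (b) For every strictly dominant λ ∈ ℝ², one has ⟨(s₁ ∘ s₂ ∘ s₁) λ, ϖ₁⟩ < 0 and ⟨(s₂ ∘ s₁ ∘ s₂) λ, ϖ₂⟩ < 0. Consequently, ℓ_{ϖ₁}⁻(λ) = ℓ_{ϖ₂}⁻(λ) = 3 for every strictly dominant λ, and the minimum of ℓ_h⁻(λ) over all pairs of nonzero dominant vectors h, λ equals 3. -/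

import Mathlib

open scoped RealInnerProductSpace

/-- The simple root `α₁ = (1, 0)` of type `G₂`. -/
noncomputable def g2a1 : EuclideanSpace ℝ (Fin 2) :=
  WithLp.toLp 2 (fun i : Fin 2 => if (i : ℕ) = 0 then (1 : ℝ) else 0)

/-- The simple root `α₂ = (−3/2, √3/2)` of type `G₂`. -/
noncomputable def g2a2 : EuclideanSpace ℝ (Fin 2) :=
  WithLp.toLp 2 (fun i : Fin 2 => if (i : ℕ) = 0 then -(3 / 2) else Real.sqrt 3 / 2)

/-- The orthogonal reflection of `ℝ²` in the line orthogonal to `a`. -/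
noncomputable def reflG (a : EuclideanSpace ℝ (Fin 2)) (v : EuclideanSpace ℝ (Fin 2)) :
    EuclideanSpace ℝ (Fin 2) :=
  v - (2 * ⟪v, a⟫ / ⟪a, a⟫) • a

/-- The simple reflections `s₁, s₂` of type `G₂`. -/
noncomputable def sG (j : ℕ) : EuclideanSpace ℝ (Fin 2) → EuclideanSpace ℝ (Fin 2) :=
  if j = 1 then reflG g2a1 else reflG g2a2

/-- The composition of the simple reflections indexed by the entries of `l`
(the last entry of the list is applied first). -/
noncomputable def compG (l : List ℕ) : EuclideanSpace ℝ (Fin 2) → EuclideanSpace ℝ (Fin 2) :=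
  l.foldr (fun j g => sG j ∘ g) id

/-- The fundamental weight `ϖ₁ = 2α₁ + α₂` of type `G₂`. -/
noncomputable def g2w1 : EuclideanSpace ℝ (Fin 2) := (2 : ℝ) • g2a1 + g2a2

/-- The fundamental weight `ϖ₂ = 3α₁ + 2α₂` of type `G₂`. -/
noncomputable def g2w2 : EuclideanSpace ℝ (Fin 2) := (3 : ℝ) • g2a1 + (2 : ℝ) • g2a2

/-- `v` is dominant: `⟪v, α₁⟫ ≥ 0` and `⟪v, α₂⟫ ≥ 0`. -/
def g2dom (v : EuclideanSpace ℝ (Fin 2)) : Prop := 0 ≤ ⟪v, g2a1⟫ ∧ 0 ≤ ⟪v, g2a2⟫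

/-- `v` is strictly dominant: `⟪v, α₁⟫ > 0` and `⟪v, α₂⟫ > 0`. -/
def g2sdom (v : EuclideanSpace ℝ (Fin 2)) : Prop := 0 < ⟪v, g2a1⟫ ∧ 0 < ⟪v, g2a2⟫

lemma inner2 (x y : EuclideanSpace ℝ (Fin 2)) : ⟪x, y⟫ = x 0 * y 0 + x 1 * y 1 := by
  simp [PiLp.inner_apply, Fin.sum_univ_two, RCLike.inner_apply]; ring

lemma a1_0 : g2a1 0 = 1 := rfl
lemma a1_1 : g2a1 1 = 0 := rfl
lemma a2_0 : g2a2 0 = -(3/2) := rfl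
lemma a2_1 : g2a2 1 = Real.sqrt 3 / 2 := rfl
lemma hs3 : Real.sqrt 3 * Real.sqrt 3 = 3 := Real.mul_self_sqrt (by norm_num)

lemma gram11 : ⟪g2a1, g2a1⟫ = 1 := by rw [inner2, a1_0, a1_1]; ring
lemma gram12 : ⟪g2a1, g2a2⟫ = -(3/2) := by rw [inner2, a1_0, a1_1, a2_0, a2_1]; ring
lemma gram21 : ⟪g2a2, g2a1⟫ = -(3/2) := by rw [inner2, a1_0, a1_1, a2_0, a2_1]; ring
lemma gram22 : ⟪g2a2, g2a2⟫ = 3 := by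
  rw [inner2, a2_0, a2_1]; rw [div_mul_div_comm, hs3]; ring

lemma sG1_def : sG 1 = reflG g2a1 := if_pos rfl
lemma sG2_def : sG 2 = reflG g2a2 := if_neg (by norm_num)

lemma inner_reflG (a v w : EuclideanSpace ℝ (Fin 2)) :
    ⟪reflG a v, w⟫ = ⟪v, w⟫ - (2 * ⟪v, a⟫ / ⟪a, a⟫) * ⟪a, w⟫ := by
  rw [reflG, inner_sub_left, real_inner_smul_left]

lemma r1a1 (v : EuclideanSpace ℝ (Fin 2)) : ⟪sG 1 v, g2a1⟫ = -⟪v, g2a1⟫ := by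
  rw [sG1_def, inner_reflG, gram11]; ring
lemma r1a2 (v : EuclideanSpace ℝ (Fin 2)) : ⟪sG 1 v, g2a2⟫ = ⟪v, g2a2⟫ + 3 * ⟪v, g2a1⟫ := by
  rw [sG1_def, inner_reflG, gram11, gram12]; ring
lemma r2a1 (v : EuclideanSpace ℝ (Fin 2)) : ⟪sG 2 v, g2a1⟫ = ⟪v, g2a1⟫ + ⟪v, g2a2⟫ := by
  rw [sG2_def, inner_reflG, gram22, gram21]; ring
lemma r2a2 (v : EuclideanSpace ℝ (Fin 2)) : ⟪sG 2 v, g2a2⟫ = -⟪v, g2a2⟫ := by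
  rw [sG2_def, inner_reflG, gram22]; ring

/-- Expansion of the inner product through pairings with the simple roots. -/
lemma expandG (u h : EuclideanSpace ℝ (Fin 2)) :
    ⟪u, h⟫ = ⟪h, g2a1⟫ * (4 * ⟪u, g2a1⟫ + 2 * ⟪u, g2a2⟫)
      + ⟪h, g2a2⟫ * (2 * ⟪u, g2a1⟫ + (4/3) * ⟪u, g2a2⟫) := by
  simp only [inner2, a1_0, a1_1, a2_0, a2_1]
  linear_combination (-(u 1 * h 1)/3) * hs3

lemma pw1a1 : ⟪g2w1, g2a1⟫ = 1/2 := by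
  rw [g2w1, inner_add_left, real_inner_smul_left, gram11, gram21]; ring
lemma pw1a2 : ⟪g2w1, g2a2⟫ = 0 := by
  rw [g2w1, inner_add_left, real_inner_smul_left, gram12, gram22]; ring
lemma pw2a1 : ⟪g2w2, g2a1⟫ = 0 := by
  rw [g2w2, inner_add_left, real_inner_smul_left, real_inner_smul_left, gram11, gram21]; ring
lemma pw2a2 : ⟪g2w2, g2a2⟫ = 3/2 := by
  rw [g2w2, inner_add_left, real_inner_smul_left, real_inner_smul_left, gram12, gram22]; ring

lemma dom_w1 : g2dom g2w1 := ⟨by rw [pw1a1]; norm_num, by rw [pw1a2]⟩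
lemma dom_w2 : g2dom g2w2 := ⟨by rw [pw2a1], by rw [pw2a2]; norm_num⟩
lemma w1_ne : g2w1 ≠ 0 := by
  intro h0
  have := pw1a1
  rw [h0, inner_zero_left] at this
  norm_num at this
lemma w2_ne : g2w2 ≠ 0 := by
  intro h0
  have := pw2a2
  rw [h0, inner_zero_left] at this
  norm_num at this
lemma sdom_ne {v : EuclideanSpace ℝ (Fin 2)} (hv : g2sdom v) : v ≠ 0 := by
  intro h0
  have := hv.1
  rw [h0, inner_zero_left] at this
  exact lt_irrefl _ this

lemma key3a (lam : EuclideanSpace ℝ (Fin 2)) :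
    ⟪compG [1, 2, 1] lam, g2w1⟫ = -⟪lam, g2a1⟫ := by
  have e : compG [1, 2, 1] lam = sG 1 (sG 2 (sG 1 lam)) := rfl
  rw [e, expandG _ g2w1]
  simp only [r1a1, r1a2, r2a1, r2a2, pw1a1, pw1a2]
  ring

lemma key3b (lam : EuclideanSpace ℝ (Fin 2)) :
    ⟪compG [2, 1, 2] lam, g2w2⟫ = -⟪lam, g2a2⟫ := by
  have e : compG [2, 1, 2] lam = sG 2 (sG 1 (sG 2 lam)) := rfl
  rw [e, expandG _ g2w2]
  simp only [r1a1, r1a2, r2a1, r2a2, pw2a1, pw2a2]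
  ring

/-- Part (a): words of length at most 2 keep the pairing nonnegative. -/
lemma partA (h lam : EuclideanSpace ℝ (Fin 2)) (hdh : g2dom h) (hdl : g2dom lam)
    (l : List ℕ) (hl : ∀ m ∈ l, m = 1 ∨ m = 2) (hlen : l.length ≤ 2) :
    0 ≤ ⟪compG l lam, h⟫ := by
  obtain ⟨hq1, hq2⟩ := hdh
  obtain ⟨hp1, hp2⟩ := hdl
  rcases l with _ | ⟨m, _ | ⟨n, _ | ⟨k, t⟩⟩⟩
  · -- empty word
    have e : compG [] lam = lam := rfl
    rw [e, expandG _ h]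
    nlinarith [mul_nonneg hq1 hp1, mul_nonneg hq1 hp2, mul_nonneg hq2 hp1, mul_nonneg hq2 hp2]
  · rcases hl m (by simp) with rfl | rfl
    · have e : compG [1] lam = sG 1 lam := rfl
      rw [e, expandG _ h]
      simp only [r1a1, r1a2, r2a1, r2a2, r1a1, r1a2]
      nlinarith [mul_nonneg hq1 hp1, mul_nonneg hq1 hp2, mul_nonneg hq2 hp1, mul_nonneg hq2 hp2]
    · have e : compG [2] lam = sG 2 lam := rfl
      rw [e, expandG _ h]
      simp only [r1a1, r1a2, r2a1, r2a2, r2a1, r2a2]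
      nlinarith [mul_nonneg hq1 hp1, mul_nonneg hq1 hp2, mul_nonneg hq2 hp1, mul_nonneg hq2 hp2]
  · rcases hl m (by simp) with rfl | rfl <;> rcases hl n (by simp) with rfl | rfl
    · have e : compG [1, 1] lam = sG 1 (sG 1 lam) := rfl
      rw [e, expandG _ h]
      simp only [r1a1, r1a2, r2a1, r2a2, r1a1, r1a2, r1a1, r1a2]
      nlinarith [mul_nonneg hq1 hp1, mul_nonneg hq1 hp2, mul_nonneg hq2 hp1, mul_nonneg hq2 hp2]
    · have e : compG [1, 2] lam = sG 1 (sG 2 lam) := rfl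
      rw [e, expandG _ h]
      simp only [r1a1, r1a2, r2a1, r2a2, r1a1, r1a2, r2a1, r2a2]
      nlinarith [mul_nonneg hq1 hp1, mul_nonneg hq1 hp2, mul_nonneg hq2 hp1, mul_nonneg hq2 hp2]
    · have e : compG [2, 1] lam = sG 2 (sG 1 lam) := rfl
      rw [e, expandG _ h]
      simp only [r1a1, r1a2, r2a1, r2a2, r2a1, r2a2, r1a1, r1a2]
      nlinarith [mul_nonneg hq1 hp1, mul_nonneg hq1 hp2, mul_nonneg hq2 hp1, mul_nonneg hq2 hp2]
    · have e : compG [2, 2] lam = sG 2 (sG 2 lam) := rfl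
      rw [e, expandG _ h]
      simp only [r1a1, r1a2, r2a1, r2a2, r2a1, r2a2, r2a1, r2a2]
      nlinarith [mul_nonneg hq1 hp1, mul_nonneg hq1 hp2, mul_nonneg hq2 hp1, mul_nonneg hq2 hp2]
  · simp at hlen

theorem statement19 :
    (∀ h lam : EuclideanSpace ℝ (Fin 2), g2dom h → h ≠ 0 → g2dom lam → lam ≠ 0 →
      ∀ l : List ℕ, (∀ m ∈ l, m = 1 ∨ m = 2) → l.length ≤ 2 →
        0 ≤ ⟪compG l lam, h⟫) ∧
    (∀ lam : EuclideanSpace ℝ (Fin 2), g2sdom lam →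
      ⟪compG [1, 2, 1] lam, g2w1⟫ < 0 ∧ ⟪compG [2, 1, 2] lam, g2w2⟫ < 0) ∧
    (∀ lam : EuclideanSpace ℝ (Fin 2), g2sdom lam →
      IsLeast {k : ℕ | ∃ l : List ℕ, (∀ m ∈ l, m = 1 ∨ m = 2) ∧ l.length = k ∧
          ⟪compG l lam, g2w1⟫ < 0} 3 ∧
      IsLeast {k : ℕ | ∃ l : List ℕ, (∀ m ∈ l, m = 1 ∨ m = 2) ∧ l.length = k ∧
          ⟪compG l lam, g2w2⟫ < 0} 3) ∧
    IsLeast {k : ℕ | ∃ h lam : EuclideanSpace ℝ (Fin 2),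
        g2dom h ∧ h ≠ 0 ∧ g2dom lam ∧ lam ≠ 0 ∧
        ∃ l : List ℕ, (∀ m ∈ l, m = 1 ∨ m = 2) ∧ l.length = k ∧
          ⟪compG l lam, h⟫ < 0} 3 := by
  refine ⟨fun h lam hdh _ hdl _ l hl hlen => partA h lam hdh hdl l hl hlen, ?_, ?_, ?_⟩
  · intro lam hs
    exact ⟨by rw [key3a]; linarith [hs.1], by rw [key3b]; linarith [hs.2]⟩
  · intro lam hs
    have hdl : g2dom lam := ⟨le_of_lt hs.1, le_of_lt hs.2⟩
    constructor
    · constructor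
      · exact ⟨[1, 2, 1], by decide, rfl, by rw [key3a]; linarith [hs.1]⟩
      · rintro k ⟨l, hl, hlen, hneg⟩
        by_contra hk
        push_neg at hk
        have h2 : l.length ≤ 2 := by omega
        exact absurd hneg (not_lt.2 (partA g2w1 lam dom_w1 hdl l hl h2))
    · constructor
      · exact ⟨[2, 1, 2], by decide, rfl, by rw [key3b]; linarith [hs.2]⟩
      · rintro k ⟨l, hl, hlen, hneg⟩
        by_contra hk
        push_neg at hk
        have h2 : l.length ≤ 2 := by omega
        exact absurd hneg (not_lt.2 (partA g2w2 lam dom_w2 hdl l hl h2))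
  · constructor
    · refine ⟨g2w1, g2w1, dom_w1, w1_ne, dom_w1, w1_ne, [1, 2, 1], by decide, rfl, ?_⟩
      rw [key3a, pw1a1]; norm_num
    · rintro k ⟨h, lam, hdh, _, hdl, _, l, hl, hlen, hneg⟩
      by_contra hk
      push_neg at hk
      have h2 : l.length ≤ 2 := by omega
      exact absurd hneg (not_lt.2 (partA h lam hdh hdl l hl h2))
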